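/- arXiv:1410.7261 — 7 statements merged into one kernel-verified Lean document; each statement's English description precedes it below -/
import Mathlib

section
/- Let S be a semicopula, μ a capacity on (X,𝒜), f : X → [0,1] measurable, and a ∈ [0,1] with f(x) + a ≤ 1 for all x. Then I(μ, f + a) = max(a, sup_{t ∈ (0, 1-a]} S(t + a, μ({x : f(x) ≥ t}))). -/
open Set

structure IsSemicopula (S : ℝ → ℝ → ℝ) : Prop where
  mem : ∀ x ∈ Icc (0:ℝ) 1, ∀ y ∈ Icc (0:ℝ) 1, S x y ∈ Icc (0:ℝ) 1
  mono_left : ∀ y ∈ Icc (0:ℝ) 1, ∀ x₁ ∈ Icc (0:ℝ) 1, ∀ x₂ ∈ Icc (0:ℝ) 1,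
    x₁ ≤ x₂ → S x₁ y ≤ S x₂ y
  mono_right : ∀ x ∈ Icc (0:ℝ) 1, ∀ y₁ ∈ Icc (0:ℝ) 1, ∀ y₂ ∈ Icc (0:ℝ) 1,
    y₁ ≤ y₂ → S x y₁ ≤ S x y₂
  neutral_right : ∀ x ∈ Icc (0:ℝ) 1, S x 1 = x
  neutral_left : ∀ x ∈ Icc (0:ℝ) 1, S 1 x = x

structure IsCapacity {X : Type*} [MeasurableSpace X] (μ : Set X → ℝ) : Prop where
  mono : ∀ A B : Set X, A ⊆ B → μ A ≤ μ B
  empty : μ ∅ = 0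
  univ : μ Set.univ = 1
  mem : ∀ A : Set X, μ A ∈ Icc (0:ℝ) 1

/-- The smallest semicopula-based integral. -/
noncomputable def scInt {X : Type*} [MeasurableSpace X]
    (S : ℝ → ℝ → ℝ) (μ : Set X → ℝ) (f : X → ℝ) : ℝ :=
  ⨆ t : Icc (0:ℝ) 1, S t (μ {x | (t:ℝ) ≤ f x})

theorem scInt_shift_formula {X : Type*} [MeasurableSpace X]
    (S : ℝ → ℝ → ℝ) (hS : IsSemicopula S) (μ : Set X → ℝ) (hμ : IsCapacity μ)
    (f : X → ℝ) (hf : Measurable f) (hf01 : ∀ x, f x ∈ Icc (0:ℝ) 1)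
    (a : ℝ) (ha : a ∈ Icc (0:ℝ) 1) (hfa : ∀ x, f x + a ≤ 1) :
    scInt S μ (fun x => f x + a)
      = max a (⨆ t : Ioc (0:ℝ) (1 - a), S ((t:ℝ) + a) (μ {x | (t:ℝ) ≤ f x})) := by
  rw [scInt]
  set g : Icc (0:ℝ) 1 → ℝ := fun t => S t (μ {x | (t:ℝ) ≤ f x + a}) with hg
  set h : Ioc (0:ℝ) (1-a) → ℝ := fun t => S ((t:ℝ) + a) (μ {x | (t:ℝ) ≤ f x}) with hh
  have hgb : ∀ t, g t ≤ 1 := fun t => (hS.mem t t.2 _ (hμ.mem _)).2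
  have hhb : ∀ t : Ioc (0:ℝ) (1-a), h t ≤ 1 := by
    intro t
    have ht : (t:ℝ) + a ∈ Icc (0:ℝ) 1 :=
      ⟨by linarith [t.2.1, ha.1], by linarith [t.2.2]⟩
    exact (hS.mem _ ht _ (hμ.mem _)).2
  have hgbdd : BddAbove (Set.range g) := ⟨1, by rintro _ ⟨t, rfl⟩; exact hgb t⟩
  have hhbdd : BddAbove (Set.range h) := ⟨1, by rintro _ ⟨t, rfl⟩; exact hhb t⟩
  have haL : a ≤ ⨆ t, g t := by
    have hga : g ⟨a, ha⟩ = a := by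
      have hs : {x | a ≤ f x + a} = Set.univ := by
        ext x
        simp only [mem_setOf_eq, mem_univ, iff_true]
        linarith [(hf01 x).1]
      show S a (μ {x | a ≤ f x + a}) = a
      rw [hs, hμ.univ, hS.neutral_right a ha]
    calc a = g ⟨a, ha⟩ := hga.symm
    _ ≤ _ := le_ciSup hgbdd _
  apply le_antisymm
  · apply ciSup_le
    intro t
    rcases le_or_gt (t:ℝ) a with hta | hta
    · have hset : {x | (t:ℝ) ≤ f x + a} = Set.univ := by
        ext x
        simp only [mem_setOf_eq, mem_univ, iff_true]
        linarith [(hf01 x).1]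
      have hgt : g t = (t:ℝ) := by simp [hg, hset, hμ.univ, hS.neutral_right _ t.2]
      rw [hgt]
      exact le_max_of_le_left hta
    · have hs : (t:ℝ) - a ∈ Ioc (0:ℝ) (1-a) := ⟨by linarith, by linarith [t.2.2]⟩
      have hset : {x | (t:ℝ) ≤ f x + a} = {x | (t:ℝ) - a ≤ f x} := by
        ext x; simp only [mem_setOf_eq]; constructor <;> intro <;> linarith
      have hgt : g t = h ⟨(t:ℝ) - a, hs⟩ := by simp [hg, hh, hset]
      refine le_max_of_le_right ?_
      rw [hgt]
      exact le_ciSup hhbdd _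
  · apply max_le haL
    rcases isEmpty_or_nonempty (Ioc (0:ℝ) (1-a)) with hE | hNE
    · rw [Real.iSup_of_isEmpty]
      linarith [haL, ha.1]
    · apply ciSup_le
      intro t
      have ht1 : (t:ℝ) + a ∈ Icc (0:ℝ) 1 :=
        ⟨by linarith [t.2.1, ha.1], by linarith [t.2.2]⟩
      have hset : {x | (t:ℝ) + a ≤ f x + a} = {x | (t:ℝ) ≤ f x} := by
        ext x; simp only [mem_setOf_eq]; constructor <;> intro <;> linarith
      have hht : h t = g ⟨(t:ℝ) + a, ht1⟩ := by simp [hg, hh, hset]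
      rw [hht]
      exact le_ciSup hgbdd _
end

section
/- For the Łukasiewicz t-norm S_L(a,b) = max(a+b-1, 0), for every measurable space (X,𝒜), every capacity μ on 𝒜, every measurable f : X → [0,1], and every a ∈ [0,1] such that f + a takes values in [0,1], the integral I(μ, f+a) = sup_{t∈[0,1]} S_L(t, μ({f+a ≥ t})) equals I(μ,f) + a. -/
open Set

theorem lukasiewicz_translation_invariant {X : Type*} [MeasurableSpace X]
    (μ : Set X → ℝ) (hμ : IsCapacity μ)
    (f : X → ℝ) (hf : Measurable f) (hf01 : ∀ x, f x ∈ Icc (0:ℝ) 1)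
    (a : ℝ) (ha : a ∈ Icc (0:ℝ) 1) (hfa : ∀ x, f x + a ≤ 1) :
    scInt (fun u v => max (u + v - 1) 0) μ (fun x => f x + a)
      = scInt (fun u v => max (u + v - 1) 0) μ f + a := by
  obtain ⟨ha0, ha1⟩ := ha
  show (⨆ t : Icc (0:ℝ) 1, max ((t:ℝ) + μ {x | (t:ℝ) ≤ f x + a} - 1) 0)
      = (⨆ t : Icc (0:ℝ) 1, max ((t:ℝ) + μ {x | (t:ℝ) ≤ f x} - 1) 0) + a
  set F : Icc (0:ℝ) 1 → ℝ := fun t => max ((t:ℝ) + μ {x | (t:ℝ) ≤ f x + a} - 1) 0 with hFdef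
  set G : Icc (0:ℝ) 1 → ℝ := fun t => max ((t:ℝ) + μ {x | (t:ℝ) ≤ f x} - 1) 0 with hGdef
  have hbF : BddAbove (Set.range F) := by
    refine ⟨1, ?_⟩; rintro _ ⟨t, rfl⟩
    have h1 := (hμ.mem {x | (t:ℝ) ≤ f x + a}).2
    have h2 := t.2.2
    exact max_le (by linarith) zero_le_one
  have hbG : BddAbove (Set.range G) := by
    refine ⟨1, ?_⟩; rintro _ ⟨t, rfl⟩
    have h1 := (hμ.mem {x | (t:ℝ) ≤ f x}).2
    have h2 := t.2.2
    exact max_le (by linarith) zero_le_one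
  have hFa : F ⟨a, ha0, ha1⟩ = a := by
    have huniv : {x : X | a ≤ f x + a} = Set.univ := by
      ext x; simp only [Set.mem_setOf_eq, Set.mem_univ, iff_true]
      have := (hf01 x).1; linarith
    simp only [hFdef, huniv, hμ.univ]
    rw [show a + 1 - 1 = a by ring, max_eq_left ha0]
  have haF : a ≤ ⨆ t, F t := hFa ▸ le_ciSup hbF _
  have hle : (⨆ t, F t) ≤ (⨆ t, G t) + a := by
    have hG0 : (0:ℝ) ≤ ⨆ t, G t :=
      le_trans (le_max_right _ 0) (le_ciSup hbG ⟨0, le_refl _, zero_le_one⟩)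
    refine ciSup_le fun t => ?_
    obtain ⟨t, ht0, ht1⟩ := t
    by_cases hta : t ≤ a
    · have huniv : {x : X | t ≤ f x + a} = Set.univ := by
        ext x; simp only [Set.mem_setOf_eq, Set.mem_univ, iff_true]
        have := (hf01 x).1; linarith
      have hFt : F ⟨t, ht0, ht1⟩ = t := by
        simp only [hFdef, huniv, hμ.univ]
        rw [show t + 1 - 1 = t by ring, max_eq_left ht0]
      rw [hFt]; linarith
    · push_neg at hta
      have hs0 : (0:ℝ) ≤ t - a := by linarith
      have hs1 : t - a ≤ 1 := by linarith
      have hset : {x : X | t ≤ f x + a} = {x : X | t - a ≤ f x} := by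
        ext x; simp only [Set.mem_setOf_eq]; constructor <;> intro h <;> linarith
      have h1 : F ⟨t, ht0, ht1⟩ ≤ G ⟨t - a, hs0, hs1⟩ + a := by
        simp only [hFdef, hGdef, hset]
        have he : t + μ {x : X | t - a ≤ f x} - 1
            = (t - a + μ {x : X | t - a ≤ f x} - 1) + a := by ring
        rw [he]
        calc max ((t - a + μ {x : X | t - a ≤ f x} - 1) + a) 0
            ≤ max ((t - a + μ {x : X | t - a ≤ f x} - 1) + a) (0 + a) :=
              max_le_max le_rfl (by linarith)
          _ = max (t - a + μ {x : X | t - a ≤ f x} - 1) 0 + a :=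
              max_add_add_right _ _ _
      have h2 : G ⟨t - a, hs0, hs1⟩ ≤ ⨆ t, G t := le_ciSup hbG _
      linarith
  have hge : (⨆ t, G t) + a ≤ ⨆ t, F t := by
    have key : ∀ t : Icc (0:ℝ) 1, G t + a ≤ ⨆ t, F t := by
      rintro ⟨t, ht0, ht1⟩
      by_cases hta : t ≤ 1 - a
      · have hu0 : (0:ℝ) ≤ t + a := by linarith
        have hu1 : t + a ≤ 1 := by linarith
        have hset : {x : X | t + a ≤ f x + a} = {x : X | t ≤ f x} := by
          ext x; simp only [Set.mem_setOf_eq]; constructor <;> intro h <;> linarith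
        have hFu : F ⟨t + a, hu0, hu1⟩ = max (t + a + μ {x : X | t ≤ f x} - 1) 0 := by
          simp only [hFdef, hset]
        have h1 : t + a + μ {x : X | t ≤ f x} - 1 ≤ ⨆ t, F t :=
          le_trans (le_max_left _ _) (hFu ▸ le_ciSup hbF _)
        have hGt : G ⟨t, ht0, ht1⟩ + a
            = max (t + μ {x : X | t ≤ f x} - 1 + a) (0 + a) := by
          simp only [hGdef]; rw [max_add_add_right]
        rw [hGt]
        exact max_le (by linarith) (by linarith)
      · push_neg at hta
        have hempty : {x : X | t ≤ f x} = ∅ := by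
          ext x; simp only [Set.mem_setOf_eq, Set.mem_empty_iff_false, iff_false]
          have := hfa x; intro h; linarith
        have hGt : G ⟨t, ht0, ht1⟩ = 0 := by
          simp only [hGdef, hempty, hμ.empty]
          rw [max_eq_right (by linarith)]
        rw [hGt, zero_add]; exact haF
    have : (⨆ t, G t) ≤ (⨆ t, F t) - a :=
      ciSup_le fun t => by have := key t; linarith
    linarith
  linarith
end

section
/- Let S : [0,1]² → [0,1] be a semicopula such that for all a, b ∈ [0,1]: max(a, S(1,b)) = S(1-a, b) + a. Then S equals the Łukasiewicz t-norm: S(c,b) = max(c + b - 1, 0) for all c, b ∈ [0,1]. -/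
open Set

theorem semicopula_functional_eq_lukasiewicz (S : ℝ → ℝ → ℝ) (hS : IsSemicopula S)
    (h : ∀ a ∈ Icc (0:ℝ) 1, ∀ b ∈ Icc (0:ℝ) 1, max a (S 1 b) = S (1 - a) b + a) :
    ∀ c ∈ Icc (0:ℝ) 1, ∀ b ∈ Icc (0:ℝ) 1, S c b = max (c + b - 1) 0 := by
  intro c hc b hb
  have ha : (1 - c) ∈ Icc (0:ℝ) 1 := ⟨by linarith [hc.2], by linarith [hc.1]⟩
  have := h (1 - c) ha b hb
  rw [hS.neutral_left b hb] at this
  have h1 : (1 : ℝ) - (1 - c) = c := by ring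
  rw [h1] at this
  rcases le_total (1 - c) b with hle | hle
  · rw [max_eq_right hle] at this
    rw [max_eq_left (by linarith)]
    linarith
  · rw [max_eq_left hle] at this
    rw [max_eq_right (by linarith)]
    linarith
end

section
/- Let S be a semicopula and suppose that for every measurable space (X,𝒜), every capacity μ on 𝒜, every measurable f : X → [0,1], and every a ∈ [0,1] with f + a valued in [0,1], the translation invariance I(μ, f+a) = I(μ,f) + a holds, where I(μ,f) = sup_{t∈[0,1]} S(t, μ({f ≥ t})). Then S is the Łukasiewicz t-norm: S(x,y) = max(x+y-1, 0) for all x,y ∈ [0,1]. -/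
open Set

-- auxiliary
lemma semicopula_right_zero {S : ℝ → ℝ → ℝ} (hS : IsSemicopula S)
    {t : ℝ} (ht : t ∈ Icc (0:ℝ) 1) : S t 0 = 0 := by
  have h1 : S t 0 ≤ S 1 0 := hS.mono_left 0 (by norm_num) t ht 1 (by norm_num) ht.2
  have h2 : S 1 0 = 0 := hS.neutral_left 0 (by norm_num)
  have h3 := (hS.mem t ht 0 (by norm_num)).1
  linarith

lemma semicopula_left_zero {S : ℝ → ℝ → ℝ} (hS : IsSemicopula S)
    {t : ℝ} (ht : t ∈ Icc (0:ℝ) 1) : S 0 t = 0 := by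
  have h1 : S 0 t ≤ S 0 1 := hS.mono_right 0 (by norm_num) t ht 1 (by norm_num) ht.2
  have h2 : S 0 1 = 0 := hS.neutral_right 0 (by norm_num)
  have h3 := (hS.mem 0 (by norm_num) t ht).1
  linarith

open Classical in
noncomputable def hutMu (y : ℝ) : Set Bool → ℝ :=
  fun A => if true ∈ A then (if false ∈ A then 1 else y) else 0

lemma hutMu_capacity {y : ℝ} (hy : y ∈ Icc (0:ℝ) 1) : IsCapacity (hutMu y) := by
  constructor
  · intro A B hAB
    simp only [hutMu]
    split_ifs <;>
      first
        | linarith [hy.1, hy.2]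
        | exact absurd (hAB ‹true ∈ A›) ‹true ∉ B›
        | exact absurd (hAB ‹false ∈ A›) ‹false ∉ B›
  · simp [hutMu]
  · simp [hutMu]
  · intro A
    simp only [hutMu]
    split_ifs <;> first | exact hy | (constructor <;> norm_num)


lemma scInt_simple {S : ℝ → ℝ → ℝ} (hS : IsSemicopula S) {x y : ℝ}
    (hx : x ∈ Icc (0:ℝ) 1) (hy : y ∈ Icc (0:ℝ) 1) (hx0 : 0 < x) :
    scInt S (hutMu y) (fun z : Bool => if z then x else 0) = S x y := by
  have hbdd : BddAbove (Set.range fun t : Icc (0:ℝ) 1 =>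
      S t (hutMu y {z : Bool | (t:ℝ) ≤ if z then x else 0})) := by
    refine ⟨1, ?_⟩
    rintro _ ⟨t, rfl⟩
    exact (hS.mem t t.2 _ ((hutMu_capacity hy).mem _)).2
  haveI : Nonempty (Icc (0:ℝ) 1) := ⟨⟨0, by norm_num⟩⟩
  apply le_antisymm
  · apply ciSup_le
    intro t
    have ht := t.2
    by_cases htx : (t:ℝ) ≤ x
    · by_cases ht0 : (t:ℝ) ≤ 0
      · have hμ : hutMu y {z : Bool | (t:ℝ) ≤ if z then x else 0} = 1 := by
          simp [hutMu, htx, ht0]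
        rw [hμ, hS.neutral_right t ht]
        have := (hS.mem x hx y hy).1
        linarith [ht.1]
      · have hμ : hutMu y {z : Bool | (t:ℝ) ≤ if z then x else 0} = y := by
          simp [hutMu, htx, ht0]
        rw [hμ]
        exact hS.mono_left y hy t ht x hx htx
    · have hμ : hutMu y {z : Bool | (t:ℝ) ≤ if z then x else 0} = 0 := by
        simp [hutMu, htx]
      rw [hμ, semicopula_right_zero hS ht]
      exact (hS.mem x hx y hy).1
  · have hμ : hutMu y {z : Bool | x ≤ if z then x else 0} = y := by
      simp [hutMu, le_refl, not_le.mpr hx0]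
    have : S x y = S x (hutMu y {z : Bool | x ≤ if z then x else 0}) := by rw [hμ]
    rw [this]
    exact le_ciSup hbdd ⟨x, hx⟩

lemma scInt_shifted {S : ℝ → ℝ → ℝ} (hS : IsSemicopula S) {x y : ℝ}
    (hx : x ∈ Icc (0:ℝ) 1) (hy : y ∈ Icc (0:ℝ) 1) (hx0 : 0 < x) :
    scInt S (hutMu y) (fun z : Bool => (if z then x else 0) + (1 - x)) = max (1-x) y := by
  have hbdd : BddAbove (Set.range fun t : Icc (0:ℝ) 1 =>
      S t (hutMu y {z : Bool | (t:ℝ) ≤ (if z then x else 0) + (1 - x)})) := by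
    refine ⟨1, ?_⟩
    rintro _ ⟨t, rfl⟩
    exact (hS.mem t t.2 _ ((hutMu_capacity hy).mem _)).2
  haveI : Nonempty (Icc (0:ℝ) 1) := ⟨⟨0, by norm_num⟩⟩
  apply le_antisymm
  · apply ciSup_le
    intro t
    have ht := t.2
    have htrue : (t:ℝ) ≤ x + (1 - x) := by linarith [ht.2]
    by_cases ht1 : (t:ℝ) ≤ 0 + (1 - x)
    · have hμ : hutMu y {z : Bool | (t:ℝ) ≤ (if z then x else 0) + (1 - x)} = 1 := by
        simp only [hutMu, Set.mem_setOf_eq, if_true]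
        rw [if_pos (by simpa using htrue), if_pos (by simpa using ht1)]
      rw [hμ, hS.neutral_right t ht]
      have : (t:ℝ) ≤ 1 - x := by linarith
      exact le_trans this (le_max_left _ _)
    · have hμ : hutMu y {z : Bool | (t:ℝ) ≤ (if z then x else 0) + (1 - x)} = y := by
        simp only [hutMu, Set.mem_setOf_eq, if_true]
        rw [if_pos (by simpa using htrue), if_neg (by simpa using ht1)]
      rw [hμ]
      have h1 : S t y ≤ S 1 y := hS.mono_left y hy t ht 1 (by norm_num) ht.2
      rw [hS.neutral_left y hy] at h1
      exact le_trans h1 (le_max_right _ _)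
  · apply max_le
    · have hm : (1-x) ∈ Icc (0:ℝ) 1 := ⟨by linarith [hx.2], by linarith [hx.1]⟩
      refine le_ciSup_of_le hbdd ⟨1-x, hm⟩ ?_
      have hμ : hutMu y {z : Bool | (1-x:ℝ) ≤ (if z then x else 0) + (1 - x)} = 1 := by
        simp [hutMu]
        linarith [hx.1]
      show (1-x:ℝ) ≤ S (1-x) (hutMu y {z : Bool | (1-x:ℝ) ≤ (if z then x else 0) + (1 - x)})
      rw [hμ, hS.neutral_right (1-x) hm]
    · refine le_ciSup_of_le hbdd ⟨1, by norm_num⟩ ?_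
      have hμ : hutMu y {z : Bool | (1:ℝ) ≤ (if z then x else 0) + (1 - x)} = y := by
        simp [hutMu]
        intro hc
        linarith
      show y ≤ S 1 (hutMu y {z : Bool | (1:ℝ) ≤ (if z then x else 0) + (1 - x)})
      rw [hμ, hS.neutral_left y hy]

theorem hutnik_solution (S : ℝ → ℝ → ℝ) (hS : IsSemicopula S)
    (h : ∀ (X : Type) (mX : MeasurableSpace X) (μ : Set X → ℝ), IsCapacity μ →
      ∀ f : X → ℝ, Measurable f → (∀ x, f x ∈ Icc (0:ℝ) 1) →
      ∀ a ∈ Icc (0:ℝ) 1, (∀ x, f x + a ≤ 1) →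
        scInt S μ (fun x => f x + a) = scInt S μ f + a) :
    ∀ x ∈ Icc (0:ℝ) 1, ∀ y ∈ Icc (0:ℝ) 1, S x y = max (x + y - 1) 0 := by
  intro x hx y hy
  rcases eq_or_lt_of_le hx.1 with hx0 | hx0
  · subst hx0
    rw [semicopula_left_zero hS hy]
    rw [max_eq_right (by linarith [hy.2] : (0:ℝ) + y - 1 ≤ 0)]
  · have key := h Bool inferInstance (hutMu y) (hutMu_capacity hy)
      (fun z => if z then x else 0) (measurable_of_countable _)
      (fun z => by split_ifs <;> exact ⟨by linarith [hx.1], by linarith [hx.2]⟩)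
      (1-x) ⟨by linarith [hx.2], by linarith [hx.1]⟩
      (fun z => by split_ifs <;> linarith)
    rw [scInt_shifted hS hx hy hx0, scInt_simple hS hx hy hx0] at key
    rcases le_total y (1-x) with hc | hc
    · rw [max_eq_left hc] at key
      rw [max_eq_right (by linarith [hy.1] : x + y - 1 ≤ 0)]
      linarith
    · rw [max_eq_right hc] at key
      rw [max_eq_left (by linarith : (0:ℝ) ≤ x + y - 1)]
      linarith
end

section
/- For any a ∈ [0,1) and b ∈ [0,1], there exists a measurable space (X,𝒜), a capacity μ on 𝒜, and a measurable function f : X → [0,1] with f + a valued in [0,1], such that μ({f ≥ 0}) = 1, μ({f ≥ t}) = b for t ∈ (0, 1-a], and μ({f ≥ t}) = 0 for t ∈ (1-a, 1]. -/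
open Set

theorem witness_capacity_exists (a b : ℝ) (ha : a ∈ Ico (0:ℝ) 1) (hb : b ∈ Icc (0:ℝ) 1) :
    ∃ (X : Type) (mX : MeasurableSpace X) (μ : Set X → ℝ) (f : X → ℝ),
      IsCapacity μ ∧ Measurable f ∧ (∀ x, f x ∈ Icc (0:ℝ) 1) ∧ (∀ x, f x + a ≤ 1) ∧
      μ {x | (0:ℝ) ≤ f x} = 1 ∧
      (∀ t ∈ Ioc (0:ℝ) (1 - a), μ {x | t ≤ f x} = b) ∧
      (∀ t ∈ Ioc (1 - a) (1:ℝ), μ {x | t ≤ f x} = 0) := by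

  classical
  obtain ⟨ha0, ha1⟩ := ha
  obtain ⟨hb0, hb1⟩ := hb
  refine ⟨Bool, ⊤, fun A => if A = ∅ then 0 else if A = Set.univ then 1 else b,
    fun x => if x then 1 - a else 0, ?_, ?_, ?_, ?_, ?_, ?_, ?_⟩
  · constructor
    · intro A B hAB
      by_cases hA : A = ∅
      · simp only [hA, if_pos rfl]
        by_cases hB : B = ∅
        · simp [hB]
        · by_cases hB2 : B = Set.univ <;> simp [hB, hB2, hb0, -Bool.univ_eq]
      · have hB : B ≠ ∅ := fun h => hA (Set.subset_empty_iff.mp (h ▸ hAB))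
        by_cases hA2 : A = Set.univ
        · have : B = Set.univ := Set.eq_univ_of_univ_subset (hA2 ▸ hAB)
          simp [hA, hA2, hB, this, -Bool.univ_eq]
        · by_cases hB2 : B = Set.univ <;> simp [hA, hA2, hB, hB2, hb1, -Bool.univ_eq]
    · simp
    · simp [Set.empty_ne_univ, -Bool.univ_eq]
    · intro A
      by_cases hA : A = ∅
      · simp [hA]
      · by_cases hA2 : A = Set.univ <;> simp [hA, hA2, hb0, hb1, -Bool.univ_eq]
  · exact measurable_of_countable _
  · intro x
    cases x <;> simp <;> constructor <;> linarith
  · intro x; cases x <;> simp <;> linarith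
  · have : {x : Bool | (0:ℝ) ≤ if x then 1 - a else 0} = Set.univ := by
      ext x; cases x <;> simp <;> linarith
    simp [this, Set.empty_ne_univ, -Bool.univ_eq]
  · intro t ⟨ht0, ht1⟩
    have hset : {x : Bool | t ≤ if x then 1 - a else 0} = {true} := by
      ext x; cases x <;> simp <;> linarith
    have h1 : ({true} : Set Bool) ≠ ∅ := by simp
    have h2 : ({true} : Set Bool) ≠ Set.univ := by
      intro h
      have : false ∈ ({true} : Set Bool) := h ▸ Set.mem_univ false
      simp at this
    simp [hset, h1, h2, -Bool.univ_eq]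
  · intro t ⟨ht0, ht1⟩
    have hset : {x : Bool | t ≤ if x then 1 - a else 0} = ∅ := by
      ext x; cases x <;> simp <;> linarith
    simp [hset]
end

section
/- Let S be a semicopula and b ∈ [0,1]. Suppose μ is a capacity and f a measurable function such that μ({f ≥ 0}) = 1, μ({f ≥ t}) = b for t ∈ (0, 1-a], and μ({f ≥ t}) = 0 for t ∈ (1-a, 1], where a ∈ [0,1). If I(μ, f+a) = I(μ,f) + a, then max(a, S(1,b)) = S(1-a, b) + a. -/
open Set

theorem witness_gives_functional_eq {X : Type*} [MeasurableSpace X]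
    (S : ℝ → ℝ → ℝ) (hS : IsSemicopula S) (b : ℝ) (hb : b ∈ Icc (0:ℝ) 1)
    (a : ℝ) (ha : a ∈ Ico (0:ℝ) 1)
    (μ : Set X → ℝ) (hμ : IsCapacity μ) (f : X → ℝ) (hf : Measurable f)
    (hf01 : ∀ x, f x ∈ Icc (0:ℝ) 1) (hfa : ∀ x, f x + a ≤ 1)
    (h0 : μ {x | (0:ℝ) ≤ f x} = 1)
    (h1 : ∀ t ∈ Ioc (0:ℝ) (1 - a), μ {x | t ≤ f x} = b)
    (h2 : ∀ t ∈ Ioc (1 - a) (1:ℝ), μ {x | t ≤ f x} = 0)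
    (heq : scInt S μ (fun x => f x + a) = scInt S μ f + a) :
    max a (S 1 b) = S (1 - a) b + a := by
  obtain ⟨ha0, ha1⟩ := ha
  have h1aI : (1:ℝ) - a ∈ Icc (0:ℝ) 1 := ⟨by linarith, by linarith⟩
  have haI : a ∈ Icc (0:ℝ) 1 := ⟨ha0, le_of_lt ha1⟩
  have h0I : (0:ℝ) ∈ Icc (0:ℝ) 1 := ⟨le_refl _, zero_le_one⟩
  have h1I : (1:ℝ) ∈ Icc (0:ℝ) 1 := ⟨zero_le_one, le_refl _⟩
  have hS0 : ∀ x ∈ Icc (0:ℝ) 1, S x 0 = 0 := by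
    intro x hx
    have e1 : S x 0 ≤ S 1 0 := hS.mono_left 0 h0I x hx 1 h1I hx.2
    have e2 : S 1 0 = 0 := hS.neutral_left 0 h0I
    have e3 : 0 ≤ S x 0 := (hS.mem x hx 0 h0I).1
    linarith
  have hbdd : ∀ g : X → ℝ,
      BddAbove (Set.range fun t : Icc (0:ℝ) 1 => S t (μ {x | (t:ℝ) ≤ g x})) := by
    intro g
    refine ⟨1, ?_⟩
    rintro _ ⟨t, rfl⟩
    exact (hS.mem t t.2 _ (hμ.mem _)).2
  have hSab_nonneg : 0 ≤ S (1-a) b := by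
    have := hS.mono_right (1-a) h1aI 0 h0I b hb hb.1
    rw [hS0 (1-a) h1aI] at this
    exact this
  have claimA : scInt S μ f = S (1-a) b := by
    unfold scInt
    apply le_antisymm
    · apply ciSup_le
      rintro ⟨t, ht⟩
      simp only
      rcases eq_or_lt_of_le ht.1 with h | h
      · rw [← h, h0, hS.neutral_right 0 h0I]
        exact hSab_nonneg
      · rcases le_or_gt t (1-a) with h' | h'
        · rw [h1 t ⟨h, h'⟩]
          exact hS.mono_left b hb t ht (1-a) h1aI h'
        · rw [h2 t ⟨h', ht.2⟩, hS0 t ht]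
          exact hSab_nonneg
    · have := le_ciSup (hbdd f) (⟨1-a, h1aI⟩ : Icc (0:ℝ) 1)
      simp only at this
      rwa [h1 (1-a) ⟨by linarith, le_refl _⟩] at this
  have claimB : scInt S μ (fun x => f x + a) = max a (S 1 b) := by
    unfold scInt
    apply le_antisymm
    · apply ciSup_le
      rintro ⟨t, ht⟩
      simp only
      rcases le_or_gt t a with h | h
      · have hset : {x | t ≤ f x + a} = Set.univ := by
          ext x; simp only [mem_setOf_eq, mem_univ, iff_true]
          have := (hf01 x).1; linarith
        rw [hset, hμ.univ, hS.neutral_right t ht]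
        exact le_max_of_le_left h
      · have hset : {x | t ≤ f x + a} = {x | t - a ≤ f x} := by
          ext x; simp only [mem_setOf_eq]; constructor <;> intro <;> linarith
        rw [hset, h1 (t-a) ⟨by linarith, by linarith [ht.2]⟩]
        exact le_max_of_le_right (hS.mono_left b hb t ht 1 h1I ht.2)
    · apply max_le
      · have := le_ciSup (hbdd (fun x => f x + a)) (⟨a, haI⟩ : Icc (0:ℝ) 1)
        simp only at this
        have hset : {x | a ≤ f x + a} = Set.univ := by
          ext x; simp only [mem_setOf_eq, mem_univ, iff_true]
          have := (hf01 x).1; linarith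
        rwa [hset, hμ.univ, hS.neutral_right a haI] at this
      · have := le_ciSup (hbdd (fun x => f x + a)) (⟨1, h1I⟩ : Icc (0:ℝ) 1)
        simp only at this
        have hset : {x | (1:ℝ) ≤ f x + a} = {x | 1 - a ≤ f x} := by
          ext x; simp only [mem_setOf_eq]; constructor <;> intro <;> linarith
        rwa [hset, h1 (1-a) ⟨by linarith, le_refl _⟩] at this
  rw [claimA, claimB] at heq
  exact heq
end

section
/- The Łukasiewicz t-norm S_L(a,b) = max(a+b-1,0) is the pointwise smallest function S : [0,1]² → [0,1] satisfying S(x,1) = x, S(1,y) = y, and the translation identity max(a, S(1,b)) = S(1-a,b) + a for all a,b ∈ [0,1]; in fact it is the unique semicopula satisfying that identity. -/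
open Set

theorem lukasiewicz_smallest_and_unique :
    (∀ a ∈ Icc (0:ℝ) 1, max (a + 1 - 1) 0 = a) ∧
    (∀ b ∈ Icc (0:ℝ) 1, max (1 + b - 1) 0 = b) ∧
    (∀ a ∈ Icc (0:ℝ) 1, ∀ b ∈ Icc (0:ℝ) 1,
      max a (max (1 + b - 1) 0) = max (1 - a + b - 1) 0 + a) ∧
    (∀ S : ℝ → ℝ → ℝ, (∀ x ∈ Icc (0:ℝ) 1, ∀ y ∈ Icc (0:ℝ) 1, S x y ∈ Icc (0:ℝ) 1) →
      (∀ x ∈ Icc (0:ℝ) 1, S x 1 = x) → (∀ y ∈ Icc (0:ℝ) 1, S 1 y = y) →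
      (∀ a ∈ Icc (0:ℝ) 1, ∀ b ∈ Icc (0:ℝ) 1, max a (S 1 b) = S (1 - a) b + a) →
      ∀ x ∈ Icc (0:ℝ) 1, ∀ y ∈ Icc (0:ℝ) 1, max (x + y - 1) 0 ≤ S x y) ∧
    (∀ S : ℝ → ℝ → ℝ, IsSemicopula S →
      (∀ a ∈ Icc (0:ℝ) 1, ∀ b ∈ Icc (0:ℝ) 1, max a (S 1 b) = S (1 - a) b + a) →
      ∀ x ∈ Icc (0:ℝ) 1, ∀ y ∈ Icc (0:ℝ) 1, S x y = max (x + y - 1) 0) := by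
  refine ⟨fun a ha => by rcases ha with ⟨h0, h1⟩; simp; linarith,
    fun b hb => by rcases hb with ⟨h0, h1⟩; simp; linarith,
    fun a ha b hb => by
      rcases ha with ⟨ha0, ha1⟩; rcases hb with ⟨hb0, hb1⟩
      rcases le_total a b with h | h <;>
        simp [max_def] <;> split_ifs <;> linarith,
    ?_, ?_⟩
  · intro S _ _ hL hT x hx y hy
    have key := hT (1 - x) ⟨by linarith [hx.2], by linarith [hx.1]⟩ y hy
    rw [hL y hy] at key
    have : S (1 - (1 - x)) y = max (1 - x) y - (1 - x) := by linarith
    simp only [sub_sub_cancel] at this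
    rw [this]
    rcases le_total (1 - x) y with h | h <;> simp [max_def] <;> split_ifs <;> linarith
  · intro S hS hT x hx y hy
    have key := hT (1 - x) ⟨by linarith [hx.2], by linarith [hx.1]⟩ y hy
    rw [hS.neutral_left y hy] at key
    have : S (1 - (1 - x)) y = max (1 - x) y - (1 - x) := by linarith
    simp only [sub_sub_cancel] at this
    rw [this]
    rcases le_total (1 - x) y with h | h <;> simp [max_def] <;> split_ifs <;> linarith
end
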